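/- Suppose y₁ ≥ y₂ ≥ ⋯ ≥ y_n > 0 and 0 = t₀ < a = t₁ ≤ t₂ ≤ ⋯ ≤ t_n = b. Let f be the step function whose value on [t_{i-1}, t_i) is y_i, let P = ∫₀^a f dx = y₁ a and Q = ∫_a^b f dx. Then -∫_a^b f(x) (1 + ln(x f(x))) dx ≥ P ln P - (P+Q) ln(P+Q). -/

import Mathlib

open MeasureTheory

/-- Integrability of the constant-step integrand on a positive interval. -/
lemma aux_intable (y s τ : ℝ) (hy : 0 < y) (hs : 0 < s) (hsτ : s ≤ τ) :
    IntervalIntegrable (fun x : ℝ => y * (1 + Real.log (x * y))) volume s τ := by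
  apply ContinuousOn.intervalIntegrable
  apply ContinuousOn.mul continuousOn_const
  apply ContinuousOn.add continuousOn_const
  apply ContinuousOn.log (by fun_prop)
  intro x hx
  rw [Set.uIcc_of_le hsτ] at hx
  have hx0 : 0 < x := lt_of_lt_of_le hs hx.1
  positivity

/-- FTC computation: `∫ s..τ, y (1 + log (x y)) = φ(yτ) - φ(ys)` for `0 < s ≤ τ`, `0 < y`. -/
lemma aux_integral_step (y s τ : ℝ) (hy : 0 < y) (hs : 0 < s) (hsτ : s ≤ τ) :
    ∫ x in s..τ, y * (1 + Real.log (x * y)) =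
      (y * τ) * Real.log (y * τ) - (y * s) * Real.log (y * s) := by
  have hderiv : ∀ x ∈ Set.uIcc s τ,
      HasDerivAt (fun x : ℝ => (y * x) * Real.log (y * x)) (y * (1 + Real.log (x * y))) x := by
    intro x hx
    rw [Set.uIcc_of_le hsτ] at hx
    have hxpos : 0 < x := lt_of_lt_of_le hs hx.1
    have h1 : HasDerivAt (fun u : ℝ => u * Real.log u) (Real.log (y * x) + 1) (y * x) :=
      Real.hasDerivAt_mul_log (by positivity)
    have h2 : HasDerivAt (fun x : ℝ => y * x) y x := by simpa using (hasDerivAt_id x).const_mul y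
    have h3 := h1.comp x h2
    have h4 : HasDerivAt (fun x : ℝ => (y * x) * Real.log (y * x)) ((Real.log (y * x) + 1) * y) x := h3
    convert h4 using 1
    rw [mul_comm x y]; ring
  rw [intervalIntegral.integral_eq_sub_of_hasDerivAt hderiv (aux_intable y s τ hy hs hsτ)]

/-- Increments of the convex function `u ↦ u log u` are monotone. -/
lemma aux_mul_log_increment {u v d : ℝ} (hu : 0 < u) (huv : u ≤ v) (hd : 0 ≤ d) :
    (u + d) * Real.log (u + d) - u * Real.log u
      ≤ (v + d) * Real.log (v + d) - v * Real.log v := by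
  set g : ℝ → ℝ := fun x => (x + d) * Real.log (x + d) - x * Real.log x with hg
  have hderiv : ∀ x ∈ Set.Icc u v,
      HasDerivAt g (Real.log (x + d) - Real.log x) x := by
    intro x hx
    have hxpos : 0 < x := lt_of_lt_of_le hu hx.1
    have h1 : HasDerivAt (fun x : ℝ => (x + d) * Real.log (x + d))
        (Real.log (x + d) + 1) x := by
      have := (Real.hasDerivAt_mul_log (x := x + d) (by positivity)).comp x
        ((hasDerivAt_id x).add_const d)
      have h' : HasDerivAt (fun x : ℝ => (x + d) * Real.log (x + d)) ((Real.log (x + d) + 1) * 1) x := this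
      simpa using h'
    have h2 : HasDerivAt (fun x : ℝ => x * Real.log x) (Real.log x + 1) x :=
      Real.hasDerivAt_mul_log (ne_of_gt hxpos)
    have h3 := h1.sub h2
    have h4 : HasDerivAt g ((Real.log (x + d) + 1) - (Real.log x + 1)) x := h3
    convert h4 using 1
    ring
  have hmono : MonotoneOn g (Set.Icc u v) := by
    apply monotoneOn_of_deriv_nonneg (convex_Icc u v)
    · exact fun x hx => (hderiv x hx).continuousAt.continuousWithinAt
    · intro x hx
      have hx' : x ∈ Set.Icc u v := interior_subset hx
      exact (hderiv x hx').differentiableAt.differentiableWithinAt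
    · intro x hx
      have hx' : x ∈ Set.Icc u v := interior_subset hx
      rw [(hderiv x hx').deriv]
      have hxpos : 0 < x := lt_of_lt_of_le hu hx'.1
      have := Real.log_le_log hxpos (by linarith : x ≤ x + d)
      linarith
  have := hmono (Set.left_mem_Icc.2 huv) (Set.right_mem_Icc.2 huv) huv
  simpa [hg] using this

/-- Let `y₁ ≥ ⋯ ≥ y_n > 0` and `0 = t₀ < a = t₁ ≤ t₂ ≤ ⋯ ≤ t_n = b`,
let `f` be the step function with value `y_i` on `[t_{i-1}, t_i)`, let
`P = ∫₀^a f = y₁ a` and `Q = ∫_a^b f`.  Then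
`-∫_a^b f(x)(1 + ln(x f(x))) dx ≥ P ln P - (P+Q) ln(P+Q)`. -/
theorem step_integral_log_inequality (n : ℕ) (hn : 1 ≤ n) (y t : ℕ → ℝ)
    (hy : ∀ i j, 1 ≤ i → i ≤ j → j ≤ n → y j ≤ y i)
    (hypos : ∀ i, 1 ≤ i → i ≤ n → 0 < y i)
    (ht0 : t 0 = 0) (ht1 : 0 < t 1)
    (htmono : ∀ i j, 1 ≤ i → i ≤ j → j ≤ n → t i ≤ t j)
    (f : ℝ → ℝ)
    (hf : ∀ i, 1 ≤ i → i ≤ n → ∀ x ∈ Set.Ico (t (i - 1)) (t i), f x = y i)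
    (a b P Q : ℝ) (ha : a = t 1) (hb : b = t n)
    (hP : P = y 1 * a) (hQ : Q = ∫ x in a..b, f x) :
    (-∫ x in a..b, f x * (1 + Real.log (x * f x)))
      ≥ P * Real.log P - (P + Q) * Real.log (P + Q) := by
  subst ha hb hP hQ
  obtain ⟨m, rfl⟩ : ∃ m, n = m + 1 := ⟨n - 1, (Nat.succ_pred_eq_of_pos hn).symm⟩
  have htpos : ∀ i, 1 ≤ i → i ≤ m + 1 → 0 < t i :=
    fun i h1 h2 => lt_of_lt_of_le ht1 (htmono 1 i le_rfl h1 h2)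
  -- a.e. value of f on each piece
  have hfae : ∀ k, k < m → ∀ᵐ x : ℝ, x ∈ Set.Ioc (t (k+1)) (t (k+2)) → f x = y (k+2) := by
    intro k hk
    have hne : ∀ᵐ x : ℝ, x ≠ t (k+2) := by
      refine ae_iff.2 ?_
      simp
    filter_upwards [hne] with x hxne hx
    have hxm : x ∈ Set.Ico (t (k+1)) (t (k+2)) := ⟨hx.1.le, lt_of_le_of_ne hx.2 hxne⟩
    exact hf (k+2) (by omega) (by omega) x hxm
  set g : ℝ → ℝ := fun x => f x * (1 + Real.log (x * f x)) with hg
  -- per-interval integral values and integrability for g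
  have hstep : ∀ k, k < m →
      (∫ x in t (k+1)..t (k+2), g x) =
        (y (k+2) * t (k+2)) * Real.log (y (k+2) * t (k+2))
          - (y (k+2) * t (k+1)) * Real.log (y (k+2) * t (k+1))
      ∧ IntervalIntegrable g volume (t (k+1)) (t (k+2))
      ∧ (∫ x in t (k+1)..t (k+2), f x) = y (k+2) * (t (k+2) - t (k+1))
      ∧ IntervalIntegrable f volume (t (k+1)) (t (k+2)) := by
    intro k hk
    have hyk : 0 < y (k+2) := hypos _ (by omega) (by omega)
    have htk : 0 < t (k+1) := htpos _ (by omega) (by omega)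
    have htle : t (k+1) ≤ t (k+2) := htmono _ _ (by omega) (by omega) (by omega)
    have hfa := hfae k hk
    -- congruence for g on Ι
    have hcong : ∀ᵐ x : ℝ, x ∈ Set.uIoc (t (k+1)) (t (k+2)) →
        g x = y (k+2) * (1 + Real.log (x * y (k+2))) := by
      filter_upwards [hfa] with x h hx
      rw [Set.uIoc_of_le htle] at hx
      rw [hg]
      simp only []
      rw [h hx]
    have hcongf : ∀ᵐ x : ℝ, x ∈ Set.uIoc (t (k+1)) (t (k+2)) →
        f x = y (k+2) := by
      filter_upwards [hfa] with x h hx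
      rw [Set.uIoc_of_le htle] at hx
      exact h hx
    have hres : g =ᵐ[volume.restrict (Set.Ioc (t (k+1)) (t (k+2)))]
        fun x => y (k+2) * (1 + Real.log (x * y (k+2))) := by
      filter_upwards [ae_restrict_mem measurableSet_Ioc, ae_restrict_of_ae hfa] with x hx h
      rw [hg]
      simp only []
      rw [h hx]
    have hresf : f =ᵐ[volume.restrict (Set.Ioc (t (k+1)) (t (k+2)))]
        fun _ => y (k+2) := by
      filter_upwards [ae_restrict_mem measurableSet_Ioc, ae_restrict_of_ae hfa] with x hx h
      exact h hx
    have hIc := aux_intable (y (k+2)) (t (k+1)) (t (k+2)) hyk htk htle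
    refine ⟨?_, ?_, ?_, ?_⟩
    · rw [intervalIntegral.integral_congr_ae hcong]
      exact aux_integral_step (y (k+2)) (t (k+1)) (t (k+2)) hyk htk htle
    · rw [intervalIntegrable_iff_integrableOn_Ioc_of_le htle]
      exact ((intervalIntegrable_iff_integrableOn_Ioc_of_le htle).1 hIc).congr_fun_ae hres.symm
    · rw [intervalIntegral.integral_congr_ae hcongf, intervalIntegral.integral_const]
      simp [mul_comm]
    · rw [intervalIntegrable_iff_integrableOn_Ioc_of_le htle]
      exact ((intervalIntegrable_iff_integrableOn_Ioc_of_le htle).1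
        (intervalIntegrable_const)).congr_fun_ae hresf.symm
  -- total integrals as sums
  have hsumg : ∫ x in (t 1)..(t (m+1)), g x =
      ∑ k ∈ Finset.range m,
        ((y (k+2) * t (k+2)) * Real.log (y (k+2) * t (k+2))
          - (y (k+2) * t (k+1)) * Real.log (y (k+2) * t (k+1))) := by
    have h := intervalIntegral.sum_integral_adjacent_intervals
      (a := fun k => t (k+1)) (n := m) (μ := volume) (f := g)
      (fun k hk => (hstep k hk).2.1)
    rw [← h]
    exact (Finset.sum_congr rfl (fun k hk => (hstep k (Finset.mem_range.1 hk)).1))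
  have hsumf : (∫ x in (t 1)..(t (m+1)), f x) =
      ∑ k ∈ Finset.range m, y (k+2) * (t (k+2) - t (k+1)) := by
    have h := intervalIntegral.sum_integral_adjacent_intervals
      (a := fun k => t (k+1)) (n := m) (μ := volume) (f := f)
      (fun k hk => (hstep k hk).2.2.2)
    rw [← h]
    exact (Finset.sum_congr rfl (fun k hk => (hstep k (Finset.mem_range.1 hk)).2.2.1))
  -- partial sums S
  set S : ℕ → ℝ := fun k => y 1 * t 1 + ∑ j ∈ Finset.range k, y (j+2) * (t (j+2) - t (j+1))
    with hS
  have hT : ∀ k, k + 1 ≤ m + 1 → y (k+1) * t (k+1) ≤ S k := by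
    intro k
    induction k with
    | zero => intro _; simp [hS]
    | succ k ih =>
      intro hk1
      have ihk := ih (by omega)
      have hSsucc : S (k+1) = S k + y (k+2) * (t (k+2) - t (k+1)) := by
        rw [hS]
        simp only []
        rw [Finset.sum_range_succ]
        ring
      have h1 : y (k+2) ≤ y (k+1) := hy (k+1) (k+2) (by omega) (by omega) (by omega)
      have h2 : t (k+1) ≤ t (k+2) := htmono _ _ (by omega) (by omega) (by omega)
      have h3 : 0 < t (k+1) := htpos _ (by omega) (by omega)
      nlinarith
  -- key per-interval inequality
  have hkey : ∀ k, k < m →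
      (y (k+2) * t (k+2)) * Real.log (y (k+2) * t (k+2))
        - (y (k+2) * t (k+1)) * Real.log (y (k+2) * t (k+1))
      ≤ S (k+1) * Real.log (S (k+1)) - S k * Real.log (S k) := by
    intro k hk
    have hyk : 0 < y (k+2) := hypos _ (by omega) (by omega)
    have htk : 0 < t (k+1) := htpos _ (by omega) (by omega)
    have htle : t (k+1) ≤ t (k+2) := htmono _ _ (by omega) (by omega) (by omega)
    have hu : (0:ℝ) < y (k+2) * t (k+1) := by positivity
    have huv : y (k+2) * t (k+1) ≤ S k := by
      have h1 : y (k+2) ≤ y (k+1) := hy (k+1) (k+2) (by omega) (by omega) (by omega)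
      have := hT k (by omega)
      nlinarith
    have hd : (0:ℝ) ≤ y (k+2) * (t (k+2) - t (k+1)) := by
      have := sub_nonneg.2 htle
      positivity
    have h := aux_mul_log_increment hu huv hd
    have e1 : y (k+2) * t (k+1) + y (k+2) * (t (k+2) - t (k+1)) = y (k+2) * t (k+2) := by ring
    have e2 : S k + y (k+2) * (t (k+2) - t (k+1)) = S (k+1) := by
      rw [hS]
      simp only []
      rw [Finset.sum_range_succ]
      ring
    rw [e1, e2] at h
    exact h
  -- sum the inequalities and telescope
  have hsumineq :
      ∑ k ∈ Finset.range m,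
        ((y (k+2) * t (k+2)) * Real.log (y (k+2) * t (k+2))
          - (y (k+2) * t (k+1)) * Real.log (y (k+2) * t (k+1)))
      ≤ S m * Real.log (S m) - S 0 * Real.log (S 0) := by
    calc ∑ k ∈ Finset.range m,
        ((y (k+2) * t (k+2)) * Real.log (y (k+2) * t (k+2))
          - (y (k+2) * t (k+1)) * Real.log (y (k+2) * t (k+1)))
        ≤ ∑ k ∈ Finset.range m,
            (S (k+1) * Real.log (S (k+1)) - S k * Real.log (S k)) :=
          Finset.sum_le_sum (fun k hk => hkey k (Finset.mem_range.1 hk))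
      _ = S m * Real.log (S m) - S 0 * Real.log (S 0) :=
          Finset.sum_range_sub (fun k => S k * Real.log (S k)) m
  have hS0 : S 0 = y 1 * t 1 := by simp [hS]
  have hSm : y 1 * t 1 + ∫ x in (t 1)..(t (m+1)), f x = S m := by
    rw [hsumf, hS]
  rw [ge_iff_le, hsumg, hsumf]
  have hSm2 : y 1 * t 1 + ∑ k ∈ Finset.range m, y (k+2) * (t (k+2) - t (k+1)) = S m := by
    rw [hS]
  rw [hSm2, ← hS0]
  linarith
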